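/- Let n, k, t be positive integers with t ≤ k ≤ n and n < (1/2)·k·(k/t + 1) (as rational numbers). Then ϖ(n,k,t) = ⌊1/2 + k/t − √((1/2 + k/t)² − 2n/t)⌋, where the expression inside the floor is evaluated over the real numbers. -/

import Mathlib

open Finset

/-- `H` is a family of subsets of `[n] = {1, …, n}`. -/
def OnGround (n : ℕ) (H : Finset (Finset ℕ)) : Prop :=
  ∀ A ∈ H, A ⊆ Finset.Icc 1 n

/-- `H` is `k`-uniform: every member has cardinality `k`. -/
def Uniform (k : ℕ) (H : Finset (Finset ℕ)) : Prop :=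
  ∀ A ∈ H, A.card = k

/-- `H` is at most `t`-intersecting: distinct members meet in at most `t` elements. -/
def AtMostIntersecting (t : ℕ) (H : Finset (Finset ℕ)) : Prop :=
  ∀ A ∈ H, ∀ B ∈ H, A ≠ B → (A ∩ B).card ≤ t

/-- `H` is maximally cover-free: no member is contained in the union of the others. -/
def MaxCoverFree (H : Finset (Finset ℕ)) : Prop :=
  ∀ A ∈ H, ¬ A ⊆ (H.erase A).biUnion id

/-- `ϖ(n,k,t)`: the maximum size of an at most `t`-intersecting, `k`-uniform
family of subsets of `[n]`. -/
noncomputable def varpi (n k t : ℕ) : ℕ :=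
  sSup {m | ∃ H : Finset (Finset ℕ),
    OnGround n H ∧ Uniform k H ∧ AtMostIntersecting t H ∧ H.card = m}


lemma union_lb (k t : ℕ) : ∀ (H : Finset (Finset ℕ)),
    (∀ A ∈ H, A.card = k) → (∀ A ∈ H, ∀ B ∈ H, A ≠ B → (A ∩ B).card ≤ t) →
    (H.card * k : ℤ) ≤ ((H.biUnion id).card : ℤ) + (H.card.choose 2) * t := by
  intro H
  induction H using Finset.induction_on with
  | empty => simp
  | @insert A s hA ih =>
    intro hu hi
    have ihs := ih (fun B hB => hu B (mem_insert_of_mem hB))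
      (fun B hB C hC hBC => hi B (mem_insert_of_mem hB) C (mem_insert_of_mem hC) hBC)
    have hbu : (insert A s).biUnion id = A ∪ s.biUnion id := by
      simp [Finset.biUnion_insert]
    have hAU : (A ∩ s.biUnion id).card ≤ s.card * t := by
      rw [Finset.inter_biUnion]
      calc (s.biUnion fun B => A ∩ B).card ≤ ∑ B ∈ s, (A ∩ B).card :=
            Finset.card_biUnion_le
        _ ≤ ∑ B ∈ s, t := Finset.sum_le_sum (fun B hB => by
            apply hi A (mem_insert_self A s) B (mem_insert_of_mem hB)
            rintro rfl; exact hA hB)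
        _ = s.card * t := by rw [Finset.sum_const, smul_eq_mul]
    have hcard : (A ∪ s.biUnion id).card + (A ∩ s.biUnion id).card
        = A.card + (s.biUnion id).card := Finset.card_union_add_card_inter _ _
    have hcardA : A.card = k := hu A (mem_insert_self A s)
    have hchoose : (s.card + 1).choose 2 = s.card.choose 2 + s.card := by
      rw [Nat.choose_succ_succ', Nat.choose_one_right]; ring
    rw [Finset.card_insert_of_notMem hA, hbu, hchoose]
    push_cast
    have h1 : ((A ∪ s.biUnion id).card : ℤ) = A.card + (s.biUnion id).card - (A ∩ s.biUnion id).card := by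
      have := hcard; push_cast; omega
    rw [h1, hcardA]
    have h2 : ((A ∩ s.biUnion id).card : ℤ) ≤ s.card * t := by exact_mod_cast hAU
    nlinarith [ihs]

lemma construction (n k t M : ℕ) (ht : 0 < t) (hM : 1 ≤ M) (htk : t < k)
    (hMt : (M - 1) * t ≤ k)
    (hground : M * (k - (M - 1) * t) + M.choose 2 * t ≤ n) :
    ∃ H : Finset (Finset ℕ),
      (∀ A ∈ H, A ⊆ Finset.Icc 1 n) ∧ (∀ A ∈ H, A.card = k) ∧
      (∀ A ∈ H, ∀ B ∈ H, A ≠ B → (A ∩ B).card ≤ t) ∧ H.card = M := by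
  set p := k - (M - 1) * t with hp
  have hpk : p + (M - 1) * t = k := by omega
  set T : ℕ → ℕ → ℕ := fun i j => j.choose 2 + i with hT
  set blk : ℕ → Finset ℕ := fun e => Finset.Ioc (M * p + e * t) (M * p + e * t + t) with hblk
  set pb : ℕ → ℕ → Finset ℕ := fun i j => blk (T (min i j) (max i j)) with hpb
  set pv : ℕ → Finset ℕ := fun i => Finset.Ioc (i * p) (i * p + p) with hpv
  set A : ℕ → Finset ℕ := fun i => pv i ∪ ((Finset.range M).erase i).biUnion (pb i) with hA
  -- T is strictly monotone in pairs
  have Tlt : ∀ i j i' j', i < j → i' < j' → j < j' → T i j < T i' j' := by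
    intro i j i' j' hij hij' hjj'
    have h1 : T i j < (j + 1).choose 2 := by
      have h : (j + 1).choose 2 = j.choose 2 + j := by
        rw [Nat.choose_succ_succ', Nat.choose_one_right]; ring
      simp only [hT]
      omega
    have h2 : (j + 1).choose 2 ≤ j'.choose 2 := Nat.choose_le_choose 2 hjj'
    have h3 : j'.choose 2 ≤ T i' j' := by simp [hT]
    omega
  have Tinj : ∀ i j i' j', i < j → i' < j' → T i j = T i' j' → i = i' ∧ j = j' := by
    intro i j i' j' hij hij' heq
    have hj : j = j' := by
      rcases lt_trichotomy j j' with h | h | h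
      · exact absurd heq (Nat.ne_of_lt (Tlt _ _ _ _ hij hij' h))
      · exact h
      · exact absurd heq.symm (Nat.ne_of_lt (Tlt _ _ _ _ hij' hij h))
    subst hj
    simp only [hT, Nat.add_right_cancel_iff] at heq
    exact ⟨by omega, rfl⟩
  -- disjointness of blocks
  have blkDisj : ∀ e e', e ≠ e' → Disjoint (blk e) (blk e') := by
    intro e e' hee
    rw [Finset.disjoint_left]
    intro x hx hy
    simp only [hblk, Finset.mem_Ioc] at hx hy
    rcases Nat.lt_or_ge e e' with h | h
    · have : e * t + t ≤ e' * t := by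
        calc e * t + t = (e + 1) * t := by ring
          _ ≤ e' * t := Nat.mul_le_mul_right t h
      omega
    · have h' : e' < e := by omega
      have : e' * t + t ≤ e * t := by
        calc e' * t + t = (e' + 1) * t := by ring
          _ ≤ e * t := Nat.mul_le_mul_right t h'
      omega
  have blkCard : ∀ e, (blk e).card = t := by
    intro e; simp [hblk, Nat.card_Ioc]
  have pvCard : ∀ i, (pv i).card = p := by
    intro i; simp [hpv, Nat.card_Ioc]
  have pvDisj : ∀ i j, i ≠ j → Disjoint (pv i) (pv j) := by
    intro i j hij
    rw [Finset.disjoint_left]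
    intro x hx hy
    simp only [hpv, Finset.mem_Ioc] at hx hy
    rcases Nat.lt_or_ge i j with h | h
    · have : i * p + p ≤ j * p := by
        calc i * p + p = (i + 1) * p := by ring
          _ ≤ j * p := Nat.mul_le_mul_right p h
      omega
    · have h' : j < i := by omega
      have : j * p + p ≤ i * p := by
        calc j * p + p = (j + 1) * p := by ring
          _ ≤ i * p := Nat.mul_le_mul_right p h'
      omega
  have pvblkDisj : ∀ i e, i < M → Disjoint (pv i) (blk e) := by
    intro i e hiM
    rw [Finset.disjoint_left]
    intro x hx hy
    simp only [hpv, hblk, Finset.mem_Ioc] at hx hy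
    have : i * p + p ≤ M * p := by
      calc i * p + p = (i + 1) * p := by ring
        _ ≤ M * p := Nat.mul_le_mul_right p hiM
    have : M * p ≤ M * p + e * t := by omega
    omega
  -- pb disjointness within one A
  have pbDisjSame : ∀ i, ∀ j ∈ (Finset.range M).erase i, ∀ j' ∈ (Finset.range M).erase i,
      j ≠ j' → Disjoint (pb i j) (pb i j') := by
    intro i j hj j' hj' hjj'
    have hji : j ≠ i := Finset.ne_of_mem_erase hj
    have hji' : j' ≠ i := Finset.ne_of_mem_erase hj'
    apply blkDisj
    intro heq
    have h1 : min i j < max i j := by omega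
    have h2 : min i j' < max i j' := by omega
    obtain ⟨e1, e2⟩ := Tinj _ _ _ _ h1 h2 heq
    omega
  have Acard : ∀ i, i < M → (A i).card = k := by
    intro i hiM
    have hdisj : Disjoint (pv i) (((Finset.range M).erase i).biUnion (pb i)) := by
      rw [Finset.disjoint_biUnion_right]
      intro j hj
      exact pvblkDisj i _ hiM
    rw [hA]
    simp only
    rw [Finset.card_union_of_disjoint hdisj, pvCard,
      Finset.card_biUnion (pbDisjSame i)]
    have : ∀ j ∈ (Finset.range M).erase i, (pb i j).card = t := fun j _ => blkCard _
    rw [Finset.sum_congr rfl this, Finset.sum_const, smul_eq_mul,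
      Finset.card_erase_of_mem (Finset.mem_range.mpr hiM), Finset.card_range]
    omega
  -- ground bound
  have Aground : ∀ i, i < M → A i ⊆ Finset.Icc 1 n := by
    intro i hiM x hx
    rw [hA] at hx
    simp only [Finset.mem_union, Finset.mem_biUnion] at hx
    rw [Finset.mem_Icc]
    rcases hx with hx | ⟨j, hj, hx⟩
    · simp only [hpv, Finset.mem_Ioc] at hx
      have : i * p + p ≤ M * p := by
        calc i * p + p = (i + 1) * p := by ring
          _ ≤ M * p := Nat.mul_le_mul_right p hiM
      omega
    · have hjM : j < M := Finset.mem_range.mp (Finset.mem_of_mem_erase hj)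
      have hji : j ≠ i := Finset.ne_of_mem_erase hj
      simp only [hpb, hblk, Finset.mem_Ioc] at hx
      set e := T (min i j) (max i j) with he
      have hemax : max i j < M := by omega
      have heb : e + 1 ≤ M.choose 2 := by
        have h1 : e < (max i j + 1).choose 2 := by
          have h : (max i j + 1).choose 2 = (max i j).choose 2 + max i j := by
            rw [Nat.choose_succ_succ', Nat.choose_one_right]; ring
          simp only [he, hT]
          omega
        have h2 : (max i j + 1).choose 2 ≤ M.choose 2 := Nat.choose_le_choose 2 (by omega)
        omega
      have : e * t + t ≤ M.choose 2 * t := by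
        calc e * t + t = (e + 1) * t := by ring
          _ ≤ M.choose 2 * t := Nat.mul_le_mul_right t heb
      omega
  -- intersections
  have Ainter : ∀ i j, i < M → j < M → i ≠ j → A i ∩ A j ⊆ pb i j := by
    intro i j hiM hjM hij x hx
    rw [Finset.mem_inter, hA] at hx
    simp only [Finset.mem_union, Finset.mem_biUnion] at hx
    obtain ⟨hxi, hxj⟩ := hx
    rcases hxi with hxi | ⟨j1, hj1, hxi⟩
    · rcases hxj with hxj | ⟨i1, hi1, hxj⟩
      · exact absurd hxj (Finset.disjoint_left.mp (pvDisj i j hij) hxi)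
      · exact absurd hxj (Finset.disjoint_left.mp (pvblkDisj i _ hiM) hxi)
    · rcases hxj with hxj | ⟨i1, hi1, hxj⟩
      · exact absurd hxi (Finset.disjoint_left.mp (pvblkDisj j _ hjM) hxj)
      · have hj1i : j1 ≠ i := Finset.ne_of_mem_erase hj1
        have hi1j : i1 ≠ j := Finset.ne_of_mem_erase hi1
        by_cases heq : T (min i j1) (max i j1) = T (min j i1) (max j i1)
        · have h1 : min i j1 < max i j1 := by omega
          have h2 : min j i1 < max j i1 := by omega
          obtain ⟨e1, e2⟩ := Tinj _ _ _ _ h1 h2 heq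
          have : j1 = j := by omega
          subst this
          exact hxi
        · exact absurd hxj (Finset.disjoint_left.mp (blkDisj _ _ heq) hxi)
  have AinterCard : ∀ i j, i < M → j < M → i ≠ j → (A i ∩ A j).card ≤ t := by
    intro i j hiM hjM hij
    calc (A i ∩ A j).card ≤ (pb i j).card := Finset.card_le_card (Ainter i j hiM hjM hij)
      _ = t := blkCard _
  have Ainj : ∀ i ∈ Finset.range M, ∀ j ∈ Finset.range M, A i = A j → i = j := by
    intro i hi j hj heq
    by_contra hij
    have h1 := AinterCard i j (Finset.mem_range.mp hi) (Finset.mem_range.mp hj) hij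
    rw [heq, Finset.inter_self, Acard j (Finset.mem_range.mp hj)] at h1
    omega
  refine ⟨(Finset.range M).image A, ?_, ?_, ?_, ?_⟩
  · intro B hB
    obtain ⟨i, hi, rfl⟩ := Finset.mem_image.mp hB
    exact Aground i (Finset.mem_range.mp hi)
  · intro B hB
    obtain ⟨i, hi, rfl⟩ := Finset.mem_image.mp hB
    exact Acard i (Finset.mem_range.mp hi)
  · intro B hB C hC hBC
    obtain ⟨i, hi, rfl⟩ := Finset.mem_image.mp hB
    obtain ⟨j, hj, rfl⟩ := Finset.mem_image.mp hC
    exact AinterCard i j (Finset.mem_range.mp hi) (Finset.mem_range.mp hj)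
      (fun h => hBC (by rw [h]))
  · rw [Finset.card_image_of_injOn Ainj, Finset.card_range]

lemma keyArith (t k n : ℝ) (ht : 0 < t) (htk : t ≤ k) (hkn : k ≤ n)
    (hsm : n < 1 / 2 * k * (k / t + 1)) :
    ∃ M : ℤ, M = ⌊(1 / 2 + k / t - Real.sqrt ((1 / 2 + k / t) ^ 2 - 2 * n / t))⌋ ∧
      1 ≤ M ∧ (M : ℝ) * t < k ∧
      (M : ℝ) * (k - ((M : ℝ) - 1) * t) + (M : ℝ) * ((M : ℝ) - 1) / 2 * t ≤ n ∧
      n + ((M : ℝ) + 1) * (M : ℝ) / 2 * t < ((M : ℝ) + 1) * k := by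
  obtain ⟨u, hu⟩ : ∃ u : ℝ, u = k / t := ⟨_, rfl⟩
  obtain ⟨m, hm⟩ : ∃ m : ℝ, m = n / t := ⟨_, rfl⟩
  have hut : k = u * t := by rw [hu]; field_simp
  have hmt : n = m * t := by rw [hm]; field_simp
  have hmu : m < 1 / 2 * u * (u + 1) := by
    rw [hmt, hut] at hsm
    rw [hu, hut]
    have hcan : u * t / t = u := mul_div_cancel_right₀ u (ne_of_gt ht)
    rw [hcan]
    have h2 : m * t < 1 / 2 * u * (u + 1) * t := by nlinarith
    exact lt_of_mul_lt_mul_right h2 (le_of_lt ht)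
  have hu1 : 1 ≤ u := by
    rw [hu, le_div_iff₀ ht]
    linarith
  have hum : u ≤ m := by
    rw [hut, hmt] at hkn
    exact le_of_mul_le_mul_right hkn ht
  obtain ⟨c, hc⟩ : ∃ c : ℝ, c = 1 / 2 + k / t := ⟨_, rfl⟩
  obtain ⟨D, hD⟩ : ∃ D : ℝ, D = (1 / 2 + k / t) ^ 2 - 2 * n / t := ⟨_, rfl⟩
  obtain ⟨s, hs⟩ : ∃ s : ℝ, s = Real.sqrt D := ⟨_, rfl⟩
  have hcu : c = 1 / 2 + u := by rw [hc, hu]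
  have hDm : D = (1 / 2 + u) ^ 2 - 2 * m := by
    rw [hD, ← hc, hcu, hm]; ring
  have hD4 : (1 / 4 : ℝ) < D := by rw [hDm]; nlinarith
  have hDpos : 0 ≤ D := by linarith
  have hs2 : s ^ 2 = D := by rw [hs]; exact Real.sq_sqrt hDpos
  have hs0 : 0 ≤ s := by rw [hs]; exact Real.sqrt_nonneg _
  have hshalf : 1 / 2 < s := by nlinarith
  have hsc1 : s ≤ u - 1 / 2 := by
    have h1 : D ≤ (u - 1 / 2) ^ 2 := by rw [hDm]; nlinarith
    rw [hs]
    calc Real.sqrt D ≤ Real.sqrt ((u - 1 / 2) ^ 2) := Real.sqrt_le_sqrt h1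
      _ = u - 1 / 2 := Real.sqrt_sq (by linarith)
  have h1c : 1 ≤ c - s := by rw [hcu]; linarith
  obtain ⟨M, hMR⟩ : ∃ M : ℝ, M = ((⌊c - s⌋ : ℤ) : ℝ) := ⟨_, rfl⟩
  have hMle : M ≤ c - s := by rw [hMR]; exact Int.floor_le _
  have hMlt : c - s < M + 1 := by rw [hMR]; exact Int.lt_floor_add_one _
  have hM1 : 1 ≤ M := by
    rw [hMR]
    exact_mod_cast Int.le_floor.mpr (by exact_mod_cast h1c)
  have fact5 : M * t < k := by
    have h1 : M < u := by rw [hcu] at hMle; linarith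
    rw [hut]
    exact mul_lt_mul_of_pos_right h1 ht
  have fact3 : M * (k - (M - 1) * t) + M * (M - 1) / 2 * t ≤ n := by
    have hsq : s ≤ c - M := by linarith
    have hsq2 : D ≤ (c - M) ^ 2 := by
      calc D = s ^ 2 := hs2.symm
        _ ≤ (c - M) ^ 2 := pow_le_pow_left₀ hs0 hsq 2
    rw [hDm, hcu] at hsq2
    have h4 : M * u - M * (M - 1) / 2 ≤ m := by linarith only [hsq2]
    have hprod := mul_le_mul_of_nonneg_right h4 (le_of_lt ht)
    rw [hut, hmt]
    linarith only [hprod]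
  have fact4 : n + (M + 1) * M / 2 * t < (M + 1) * k := by
    have h1 : M + 1 - c < s := by linarith
    have h2 : -s < M + 1 - c := by linarith
    have h3 : (M + 1 - c) ^ 2 < s ^ 2 := sq_lt_sq' h2 h1
    rw [hs2, hDm, hcu] at h3
    have h5 : m < (M + 1) * u - (M + 1) * M / 2 := by linarith only [h3]
    have hprod := mul_lt_mul_of_pos_right h5 ht
    rw [hut, hmt]
    linarith only [hprod]
  refine ⟨⌊c - s⌋, by rw [hc, ← hD, ← hs], ?_, ?_, ?_, ?_⟩
  · exact Int.le_floor.mpr (by exact_mod_cast h1c)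
  · rw [← hMR]; exact fact5
  · rw [← hMR]; exact fact3
  · rw [← hMR]; exact fact4

/-- Let `t ≤ k ≤ n` be positive integers with
`n < (1/2)·k·(k/t + 1)` (over ℚ). Then
`ϖ(n,k,t) = ⌊1/2 + k/t − √((1/2 + k/t)² − 2n/t)⌋`, evaluated over ℝ. -/
theorem stmt5 (n k t : ℕ) (hn : 0 < n) (hk : 0 < k) (ht : 0 < t)
    (htk : t ≤ k) (hkn : k ≤ n)
    (hsmall : (n : ℚ) < (1 / 2) * k * ((k : ℚ) / t + 1)) :
    (varpi n k t : ℤ) =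
      ⌊(1 / 2 + (k : ℝ) / t -
        Real.sqrt ((1 / 2 + (k : ℝ) / t) ^ 2 - 2 * n / t))⌋ := by
  have ht' : (0:ℝ) < t := by exact_mod_cast ht
  have htk' : (t:ℝ) ≤ k := by exact_mod_cast htk
  have hkn' : (k:ℝ) ≤ n := by exact_mod_cast hkn
  have hsmallR : (n:ℝ) < 1 / 2 * (k:ℝ) * ((k:ℝ) / (t:ℝ) + 1) := by
    have := (Rat.cast_lt (K := ℝ)).mpr hsmall
    push_cast at this
    convert this using 2 <;> norm_num
  obtain ⟨M, hM, hM1, hMtkR, hgR, hupR⟩ := keyArith (t:ℝ) (k:ℝ) (n:ℝ) ht' htk' hkn' hsmallR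
  obtain ⟨Mn, hMn⟩ : ∃ Mn : ℕ, Mn = M.toNat := ⟨_, rfl⟩
  have hMnM : (Mn:ℤ) = M := by rw [hMn]; exact Int.toNat_of_nonneg (by omega)
  have hMnR : ((Mn:ℕ):ℝ) = ((M:ℤ):ℝ) := by exact_mod_cast hMnM
  have hMn1 : 1 ≤ Mn := by omega
  have hMtk : Mn * t < k := by
    rw [← hMnR] at hMtkR
    exact_mod_cast hMtkR
  have htklt : t < k := by
    calc t = 1 * t := (one_mul t).symm
      _ ≤ Mn * t := Nat.mul_le_mul_right t hMn1
      _ < k := hMtk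
  have hMt : (Mn - 1) * t ≤ k := by
    calc (Mn - 1) * t ≤ Mn * t := Nat.mul_le_mul_right t (by omega)
      _ ≤ k := le_of_lt hMtk
  have hMt' : (Mn - 1) * t ≤ k := hMt
  -- ground bound, in ℕ
  have hground : Mn * (k - (Mn - 1) * t) + Mn.choose 2 * t ≤ n := by
    rw [← hMnR] at hgR
    have e1 : ((k - (Mn - 1) * t : ℕ) : ℝ) = (k:ℝ) - ((Mn:ℝ) - 1) * t := by
      rw [Nat.cast_sub hMt, Nat.cast_mul, Nat.cast_sub hMn1, Nat.cast_one]
    have e2 : ((Mn.choose 2 : ℕ) : ℝ) = (Mn:ℝ) * ((Mn:ℝ) - 1) / 2 := by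
      rw [Nat.cast_choose_two]
    have key : ((Mn * (k - (Mn - 1) * t) + Mn.choose 2 * t : ℕ) : ℝ) ≤ (n:ℝ) := by
      rw [Nat.cast_add, Nat.cast_mul, Nat.cast_mul, e1, e2]
      linarith only [hgR]
    exact_mod_cast key
  -- strict upper bound, in ℕ
  have hupper : n + (Mn + 1).choose 2 * t < (Mn + 1) * k := by
    rw [← hMnR] at hupR
    have e3 : (((Mn + 1).choose 2 : ℕ) : ℝ) = ((Mn:ℝ) + 1) * (Mn:ℝ) / 2 := by
      rw [Nat.cast_choose_two]; push_cast; ring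
    have key : ((n + (Mn + 1).choose 2 * t : ℕ) : ℝ) < (((Mn + 1) * k : ℕ) : ℝ) := by
      rw [Nat.cast_add, Nat.cast_mul, Nat.cast_mul, e3]
      push_cast
      linarith only [hupR]
    exact_mod_cast key
  -- the construction realizes Mn
  obtain ⟨HC, hg1, hg2, hg3, hg4⟩ :=
    construction n k t Mn ht hMn1 htklt hMt hground
  have hmem : Mn ∈ {m | ∃ H : Finset (Finset ℕ),
      OnGround n H ∧ Uniform k H ∧ AtMostIntersecting t H ∧ H.card = m} :=
    ⟨HC, hg1, hg2, hg3, hg4⟩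
  -- every family has size at most Mn
  have hub : ∀ x ∈ {m | ∃ H : Finset (Finset ℕ),
      OnGround n H ∧ Uniform k H ∧ AtMostIntersecting t H ∧ H.card = m}, x ≤ Mn := by
    rintro x ⟨H, hH1, hH2, hH3, hcard⟩
    by_contra hx
    have hx' : Mn + 1 ≤ H.card := by omega
    obtain ⟨H', hsub, hcard'⟩ := Finset.exists_subset_card_eq (s := H) (n := Mn + 1) hx'
    have h1 := union_lb k t H' (fun A hA => hH2 A (hsub hA))
      (fun A hA B hB hAB => hH3 A (hsub hA) B (hsub hB) hAB)
    have h2 : (H'.biUnion id) ⊆ Finset.Icc 1 n := by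
      intro y hy
      obtain ⟨A, hA, hyA⟩ := Finset.mem_biUnion.mp hy
      exact hH1 A (hsub hA) hyA
    have h3 : (H'.biUnion id).card ≤ n := by
      calc (H'.biUnion id).card ≤ (Finset.Icc 1 n).card := Finset.card_le_card h2
        _ = n := by rw [Nat.card_Icc]; omega
    rw [hcard'] at h1
    have h1N : (Mn + 1) * k ≤ (H'.biUnion id).card + (Mn + 1).choose 2 * t := by
      exact_mod_cast h1
    linarith only [h1N, h3, hupper]
  have hvar : varpi n k t = Mn := by
    rw [varpi]
    exact le_antisymm (csSup_le ⟨Mn, hmem⟩ hub) (le_csSup ⟨Mn, hub⟩ hmem)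
  rw [hvar, hMnM, hM]
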